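/- Let X be an n×k real matrix of rank k and K₁, K₂ k×k positive definite matrices, and Ω an n×n positive definite matrix. The equality K₁ X^T (Ω + X K₁ X^T)^{-1} = K₂ X^T (I_n + X K₂ X^T)^{-1} holds if and only if X = Ω X K₂ K₁^{-1}. -/

import Mathlib

open Matrix

lemma mulVec_inj_of_rank {n k : ℕ} (X : Matrix (Fin n) (Fin k) ℝ) (hX : X.rank = k) :
    Function.Injective X.mulVecLin := by
  rw [← LinearMap.ker_eq_bot]
  have h := LinearMap.finrank_range_add_finrank_ker X.mulVecLin
  rw [show Module.finrank ℝ (LinearMap.range X.mulVecLin) = k from hX] at h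
  simp only [Module.finrank_fintype_fun_eq_card, Fintype.card_fin] at h
  have hker : Module.finrank ℝ (LinearMap.ker X.mulVecLin) = 0 := by omega
  exact Submodule.finrank_eq_zero.mp hker

lemma posDef_XtX {n k : ℕ} (X : Matrix (Fin n) (Fin k) ℝ) (hX : X.rank = k) :
    (Xᵀ * X).PosDef := by
  refine Matrix.PosDef.of_dotProduct_mulVec_pos
    (by simpa using Matrix.isHermitian_conjTranspose_mul_self X) fun x hx => ?_
  have hXx : X *ᵥ x ≠ 0 := by
    intro h
    exact hx (mulVec_inj_of_rank X hX (by simpa using h))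
  have key : star x ⬝ᵥ (Xᵀ * X) *ᵥ x = (X *ᵥ x) ⬝ᵥ (X *ᵥ x) := by
    rw [← mulVec_mulVec, dotProduct_mulVec, vecMul_transpose]
    simp
  rw [key]
  have h1 : (0:ℝ) ≤ (X *ᵥ x) ⬝ᵥ (X *ᵥ x) :=
    Finset.sum_nonneg fun i _ => mul_self_nonneg _
  have h2 : (X *ᵥ x) ⬝ᵥ (X *ᵥ x) ≠ 0 := fun h =>
    hXx ((dotProduct_self_eq_zero (v := X *ᵥ x)).mp h)
  exact lt_of_le_of_ne h1 (Ne.symm h2)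

theorem stmt_11 {n k : ℕ} (hnk : k < n)
    (X : Matrix (Fin n) (Fin k) ℝ) (hX : X.rank = k)
    (Ω : Matrix (Fin n) (Fin n) ℝ) (hΩ : Ω.PosDef)
    (K₁ K₂ : Matrix (Fin k) (Fin k) ℝ) (hK₁ : K₁.PosDef) (hK₂ : K₂.PosDef) :
    K₁ * Xᵀ * (Ω + X * K₁ * Xᵀ)⁻¹ = K₂ * Xᵀ * (1 + X * K₂ * Xᵀ)⁻¹ ↔
      X = Ω * X * K₂ * K₁⁻¹ := by
  set A := Ω + X * K₁ * Xᵀ with hAdef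
  set B := (1 : Matrix (Fin n) (Fin n) ℝ) + X * K₂ * Xᵀ with hBdef
  have hsd1 : (X * K₁ * Xᵀ).PosSemidef := by
    have := (hK₁.posSemidef).conjTranspose_mul_mul_same Xᵀ
    simpa [Matrix.mul_assoc] using this
  have hsd2 : (X * K₂ * Xᵀ).PosSemidef := by
    have := (hK₂.posSemidef).conjTranspose_mul_mul_same Xᵀ
    simpa [Matrix.mul_assoc] using this
  have hA : A.PosDef := hΩ.add_posSemidef hsd1
  have hB : B.PosDef := Matrix.PosDef.one.add_posSemidef hsd2
  have hAdet : IsUnit A.det := hA.det_pos.ne'.isUnit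
  have hBdet : IsUnit B.det := hB.det_pos.ne'.isUnit
  have hΩdet : IsUnit Ω.det := hΩ.det_pos.ne'.isUnit
  have hK₁det : IsUnit K₁.det := hK₁.det_pos.ne'.isUnit
  have hXtXdet : IsUnit (Xᵀ * X).det := (posDef_XtX X hX).det_pos.ne'.isUnit
  have hΩt : Ωᵀ = Ω := by simpa using hΩ.isHermitian.eq
  have hK₁t : K₁ᵀ = K₁ := by simpa using hK₁.isHermitian.eq
  have hK₂t : K₂ᵀ = K₂ := by simpa using hK₂.isHermitian.eq
  constructor
  · intro h
    have h1 : X * (K₁ * Xᵀ * A⁻¹) = X * (K₂ * Xᵀ * B⁻¹) := by rw [h]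
    have e1 : X * (K₁ * Xᵀ * A⁻¹) = 1 - Ω * A⁻¹ := by
      have hinv : (Ω + X * K₁ * Xᵀ) * A⁻¹ = 1 := Matrix.mul_nonsing_inv A hAdet
      rw [add_mul] at hinv
      rw [show X * (K₁ * Xᵀ * A⁻¹) = X * K₁ * Xᵀ * A⁻¹ by
        simp only [Matrix.mul_assoc]]
      linear_combination (norm := abel) hinv
    have e2 : X * (K₂ * Xᵀ * B⁻¹) = 1 - B⁻¹ := by
      have hinv : ((1 : Matrix (Fin n) (Fin n) ℝ) + X * K₂ * Xᵀ) * B⁻¹ = 1 :=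
        Matrix.mul_nonsing_inv B hBdet
      rw [add_mul, Matrix.one_mul] at hinv
      rw [show X * (K₂ * Xᵀ * B⁻¹) = X * K₂ * Xᵀ * B⁻¹ by
        simp only [Matrix.mul_assoc]]
      linear_combination (norm := abel) hinv
    rw [e1, e2] at h1
    have e3 : Ω * A⁻¹ = B⁻¹ := sub_right_inj.mp h1
    have e4 : B * Ω = A := by
      have h5 : B * (Ω * A⁻¹) * A = B * B⁻¹ * A := by rw [e3]
      rw [Matrix.mul_nonsing_inv B hBdet, Matrix.one_mul, Matrix.mul_assoc,
        Matrix.mul_assoc, Matrix.nonsing_inv_mul A hAdet, Matrix.mul_one] at h5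
      exact h5
    have h6 : X * K₂ * Xᵀ * Ω = X * K₁ * Xᵀ := by
      rw [hBdef, add_mul, Matrix.one_mul, hAdef] at e4
      exact add_left_cancel e4
    have h7 : (Xᵀ * X) * (K₂ * Xᵀ * Ω) = (Xᵀ * X) * (K₁ * Xᵀ) := by
      have := congrArg (fun M => Xᵀ * M) h6
      simpa only [Matrix.mul_assoc] using this
    have e6 : K₂ * Xᵀ * Ω = K₁ * Xᵀ :=
      calc K₂ * Xᵀ * Ω = (Xᵀ * X)⁻¹ * ((Xᵀ * X) * (K₂ * Xᵀ * Ω)) := by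
            rw [← Matrix.mul_assoc, Matrix.nonsing_inv_mul _ hXtXdet, Matrix.one_mul]
        _ = (Xᵀ * X)⁻¹ * ((Xᵀ * X) * (K₁ * Xᵀ)) := by rw [h7]
        _ = K₁ * Xᵀ := by
            rw [← Matrix.mul_assoc, Matrix.nonsing_inv_mul _ hXtXdet, Matrix.one_mul]
    have e7 : X * K₁ = Ω * X * K₂ := by
      have := congrArg Matrix.transpose e6
      simp only [Matrix.transpose_mul, Matrix.transpose_transpose, hΩt, hK₁t, hK₂t] at this
      rw [← this, Matrix.mul_assoc]
    calc X = X * K₁ * K₁⁻¹ := by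
          rw [Matrix.mul_assoc, Matrix.mul_nonsing_inv _ hK₁det, Matrix.mul_one]
      _ = Ω * X * K₂ * K₁⁻¹ := by rw [e7]
  · intro h
    have e7 : X * K₁ = Ω * X * K₂ := by
      calc X * K₁ = Ω * X * K₂ * K₁⁻¹ * K₁ := by rw [← h]
        _ = Ω * X * K₂ := by
            rw [Matrix.mul_assoc, Matrix.nonsing_inv_mul _ hK₁det, Matrix.mul_one]
    have e6 : K₁ * Xᵀ = K₂ * Xᵀ * Ω := by
      have := congrArg Matrix.transpose e7
      simp only [Matrix.transpose_mul, Matrix.transpose_transpose, hΩt, hK₁t, hK₂t] at this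
      rw [this, Matrix.mul_assoc]
    have e4 : A = B * Ω := by
      rw [hAdef, hBdef, add_mul, Matrix.one_mul]
      congr 1
      rw [Matrix.mul_assoc X K₁ Xᵀ, e6]
      simp only [Matrix.mul_assoc]
    have einv : A⁻¹ = Ω⁻¹ * B⁻¹ := by rw [e4, Matrix.mul_inv_rev]
    rw [Matrix.mul_assoc K₁ Xᵀ, einv, ← Matrix.mul_assoc, e6]
    rw [Matrix.mul_assoc (K₂ * Xᵀ) Ω, ← Matrix.mul_assoc Ω Ω⁻¹,
      Matrix.mul_nonsing_inv _ hΩdet, Matrix.one_mul, Matrix.mul_assoc]
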